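/- In the Heisenberg group G of 3×3 upper unitriangular matrices over a finite field F of order n, the subgroups A (matrices with only the (1,2) entry nonzero), B (matrices with only the (2,3) entry nonzero), and M = Z(G) (matrices with only the (1,3) entry nonzero) satisfy: |A| = |B| = |M| = n, |G| = n³, AM and BM are subgroups of order n², G = AMB, and AB ∩ BA = A ∪ B. -/

import Mathlib

open scoped Pointwise
open Matrix

namespace Stmt16Aux
variable {F : Type*} [Field F]

def mat (a b c : F) : Matrix (Fin 3) (Fin 3) F := !![1,a,c; 0,1,b; 0,0,1]

lemma mat_mul (a b c a' b' c' : F) :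
    mat a b c * mat a' b' c' = mat (a+a') (b+b') (c+c'+a*b') := by
  ext i j
  fin_cases i <;> fin_cases j <;>
    simp [mat, Matrix.mul_apply, Fin.sum_univ_three, Matrix.vecHead, Matrix.vecTail] <;> ring

lemma mat_zero : (mat 0 0 0 : Matrix (Fin 3) (Fin 3) F) = 1 := by
  ext i j; fin_cases i <;> fin_cases j <;>
    simp [mat, Matrix.one_apply, Matrix.vecHead, Matrix.vecTail]

def e (a b c : F) : GL (Fin 3) F :=
  ⟨mat a b c, mat (-a) (-b) (a*b - c),
   by rw [mat_mul]; rw [show a + -a = (0:F) by ring, show b + -b = (0:F) by ring,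
        show c + (a*b - c) + a * -b = (0:F) by ring, mat_zero],
   by rw [mat_mul]; rw [show -a + a = (0:F) by ring, show -b + b = (0:F) by ring,
        show a*b - c + c + -a * b = (0:F) by ring, mat_zero]⟩

lemma e_val (a b c : F) : (e a b c : Matrix (Fin 3) (Fin 3) F) = mat a b c := rfl

lemma e_mul (a b c a' b' c' : F) :
    e a b c * e a' b' c' = e (a+a') (b+b') (c+c'+a*b') := by
  apply Units.ext; exact mat_mul a b c a' b' c'

lemma e_one : (e 0 0 0 : GL (Fin 3) F) = 1 := by
  apply Units.ext; exact mat_zero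

lemma e_inv (a b c : F) : (e a b c)⁻¹ = e (-a) (-b) (a*b - c) := Units.ext rfl

lemma e_inj {a b c a' b' c' : F} (h : e a b c = e a' b' c') :
    a = a' ∧ b = b' ∧ c = c' := by
  have h1 := congrArg (fun g : GL (Fin 3) F => (g : Matrix (Fin 3) (Fin 3) F) 0 1) h
  have h2 := congrArg (fun g : GL (Fin 3) F => (g : Matrix (Fin 3) (Fin 3) F) 1 2) h
  have h3 := congrArg (fun g : GL (Fin 3) F => (g : Matrix (Fin 3) (Fin 3) F) 0 2) h
  simp [e_val, mat] at h1 h2 h3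
  exact ⟨h1, h2, h3⟩


def Hsub (F : Type*) [Field F] : Subgroup (GL (Fin 3) F) where
  carrier := {g | ∃ a b c : F, g = e a b c}
  one_mem' := ⟨0, 0, 0, e_one.symm⟩
  mul_mem' := by
    rintro x y ⟨a, b, c, rfl⟩ ⟨a', b', c', rfl⟩
    exact ⟨_, _, _, e_mul a b c a' b' c'⟩
  inv_mem' := by
    rintro x ⟨a, b, c, rfl⟩
    exact ⟨_, _, _, (e_inv a b c)⟩

def Asub (F : Type*) [Field F] : Subgroup (GL (Fin 3) F) where
  carrier := {g | ∃ a : F, g = e a 0 0}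
  one_mem' := ⟨0, e_one.symm⟩
  mul_mem' := by
    rintro x y ⟨a, rfl⟩ ⟨a', rfl⟩
    exact ⟨a + a', by (try dsimp only); rw [e_mul]; ring_nf⟩
  inv_mem' := by
    rintro x ⟨a, rfl⟩
    exact ⟨-a, by rw [e_inv]; ring_nf⟩

def Bsub (F : Type*) [Field F] : Subgroup (GL (Fin 3) F) where
  carrier := {g | ∃ b : F, g = e 0 b 0}
  one_mem' := ⟨0, e_one.symm⟩
  mul_mem' := by
    rintro x y ⟨b, rfl⟩ ⟨b', rfl⟩
    exact ⟨b + b', by (try dsimp only); rw [e_mul]; ring_nf⟩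
  inv_mem' := by
    rintro x ⟨b, rfl⟩
    exact ⟨-b, by rw [e_inv]; ring_nf⟩

def Msub (F : Type*) [Field F] : Subgroup (GL (Fin 3) F) where
  carrier := {g | ∃ c : F, g = e 0 0 c}
  one_mem' := ⟨0, e_one.symm⟩
  mul_mem' := by
    rintro x y ⟨c, rfl⟩ ⟨c', rfl⟩
    exact ⟨c + c', by (try dsimp only); rw [e_mul]; ring_nf⟩
  inv_mem' := by
    rintro x ⟨c, rfl⟩
    exact ⟨-c, by rw [e_inv]; ring_nf⟩

def AMsub (F : Type*) [Field F] : Subgroup (GL (Fin 3) F) where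
  carrier := {g | ∃ a c : F, g = e a 0 c}
  one_mem' := ⟨0, 0, e_one.symm⟩
  mul_mem' := by
    rintro x y ⟨a, c, rfl⟩ ⟨a', c', rfl⟩
    exact ⟨a + a', c + c', by (try dsimp only); rw [e_mul]; ring_nf⟩
  inv_mem' := by
    rintro x ⟨a, c, rfl⟩
    exact ⟨-a, -c, by rw [e_inv]; ring_nf⟩

def BMsub (F : Type*) [Field F] : Subgroup (GL (Fin 3) F) where
  carrier := {g | ∃ b c : F, g = e 0 b c}
  one_mem' := ⟨0, 0, e_one.symm⟩
  mul_mem' := by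
    rintro x y ⟨b, c, rfl⟩ ⟨b', c', rfl⟩
    exact ⟨b + b', c + c', by (try dsimp only); rw [e_mul]; ring_nf⟩
  inv_mem' := by
    rintro x ⟨b, c, rfl⟩
    exact ⟨-b, -c, by rw [e_inv]; ring_nf⟩

/-- The entry-condition description of H, and decomposition. -/
lemma decomp {g : GL (Fin 3) F}
    (h00 : (g : Matrix (Fin 3) (Fin 3) F) 0 0 = 1)
    (h11 : (g : Matrix (Fin 3) (Fin 3) F) 1 1 = 1)
    (h22 : (g : Matrix (Fin 3) (Fin 3) F) 2 2 = 1)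
    (h10 : (g : Matrix (Fin 3) (Fin 3) F) 1 0 = 0)
    (h20 : (g : Matrix (Fin 3) (Fin 3) F) 2 0 = 0)
    (h21 : (g : Matrix (Fin 3) (Fin 3) F) 2 1 = 0) :
    g = e ((g : Matrix (Fin 3) (Fin 3) F) 0 1)
        ((g : Matrix (Fin 3) (Fin 3) F) 1 2)
        ((g : Matrix (Fin 3) (Fin 3) F) 0 2) := by
  apply Units.ext
  ext i j
  fin_cases i <;> fin_cases j <;>
    simp_all [e_val, mat, Matrix.vecHead, Matrix.vecTail]

lemma e_entries (a b c : F) :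
    (e a b c : Matrix (Fin 3) (Fin 3) F) 0 0 = 1 ∧
    (e a b c : Matrix (Fin 3) (Fin 3) F) 1 1 = 1 ∧
    (e a b c : Matrix (Fin 3) (Fin 3) F) 2 2 = 1 ∧
    (e a b c : Matrix (Fin 3) (Fin 3) F) 1 0 = 0 ∧
    (e a b c : Matrix (Fin 3) (Fin 3) F) 2 0 = 0 ∧
    (e a b c : Matrix (Fin 3) (Fin 3) F) 2 1 = 0 ∧
    (e a b c : Matrix (Fin 3) (Fin 3) F) 0 1 = a ∧
    (e a b c : Matrix (Fin 3) (Fin 3) F) 1 2 = b ∧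
    (e a b c : Matrix (Fin 3) (Fin 3) F) 0 2 = c := by
  refine ⟨?_, ?_, ?_, ?_, ?_, ?_, ?_, ?_, ?_⟩ <;>
    simp [e_val, mat, Matrix.vecHead, Matrix.vecTail]

end Stmt16Aux

open Stmt16Aux in

theorem stmt16 (F : Type*) [Field F] [Fintype F] (n : ℕ) (hn : 1 < n)
    (hF : Fintype.card F = n) :
    ∃ H A B M AM BM : Subgroup (GL (Fin 3) F),
      (H : Set (GL (Fin 3) F)) =
        {g : GL (Fin 3) F | (g : Matrix (Fin 3) (Fin 3) F) 0 0 = 1 ∧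
          (g : Matrix (Fin 3) (Fin 3) F) 1 1 = 1 ∧
          (g : Matrix (Fin 3) (Fin 3) F) 2 2 = 1 ∧
          (g : Matrix (Fin 3) (Fin 3) F) 1 0 = 0 ∧
          (g : Matrix (Fin 3) (Fin 3) F) 2 0 = 0 ∧
          (g : Matrix (Fin 3) (Fin 3) F) 2 1 = 0} ∧
      (A : Set (GL (Fin 3) F)) =
        {g : GL (Fin 3) F | g ∈ H ∧ (g : Matrix (Fin 3) (Fin 3) F) 0 2 = 0 ∧
          (g : Matrix (Fin 3) (Fin 3) F) 1 2 = 0} ∧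
      (B : Set (GL (Fin 3) F)) =
        {g : GL (Fin 3) F | g ∈ H ∧ (g : Matrix (Fin 3) (Fin 3) F) 0 1 = 0 ∧
          (g : Matrix (Fin 3) (Fin 3) F) 0 2 = 0} ∧
      (M : Set (GL (Fin 3) F)) =
        {g : GL (Fin 3) F | g ∈ H ∧ (g : Matrix (Fin 3) (Fin 3) F) 0 1 = 0 ∧
          (g : Matrix (Fin 3) (Fin 3) F) 1 2 = 0} ∧
      M = (Subgroup.center (↥H)).map H.subtype ∧
      Nat.card A = n ∧ Nat.card B = n ∧ Nat.card M = n ∧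
      Nat.card H = n ^ 3 ∧
      (AM : Set (GL (Fin 3) F)) =
        (A : Set (GL (Fin 3) F)) * (M : Set (GL (Fin 3) F)) ∧
      (BM : Set (GL (Fin 3) F)) =
        (B : Set (GL (Fin 3) F)) * (M : Set (GL (Fin 3) F)) ∧
      Nat.card AM = n ^ 2 ∧ Nat.card BM = n ^ 2 ∧
      (∀ g ∈ H, ∃ a ∈ A, ∃ m ∈ M, ∃ b ∈ B, g = a * m * b) ∧
      ((A : Set (GL (Fin 3) F)) * (B : Set (GL (Fin 3) F))) ∩
          ((B : Set (GL (Fin 3) F)) * (A : Set (GL (Fin 3) F))) =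
        (A : Set (GL (Fin 3) F)) ∪ (B : Set (GL (Fin 3) F)) := by
  classical
  refine ⟨Hsub F, Asub F, Bsub F, Msub F, AMsub F, BMsub F, ?_, ?_, ?_, ?_, ?_, ?_, ?_, ?_, ?_,
    ?_, ?_, ?_, ?_, ?_, ?_⟩
  -- H set
  · ext g
    constructor
    · rintro ⟨a, b, c, rfl⟩
      obtain ⟨h1, h2, h3, h4, h5, h6, _⟩ := e_entries a b c
      exact ⟨h1, h2, h3, h4, h5, h6⟩
    · rintro ⟨h1, h2, h3, h4, h5, h6⟩
      exact ⟨_, _, _, decomp h1 h2 h3 h4 h5 h6⟩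
  -- A set
  · ext g
    constructor
    · rintro ⟨a, rfl⟩
      obtain ⟨h1, h2, h3, h4, h5, h6, _, hb, hc⟩ := e_entries a (0:F) (0:F)
      exact ⟨⟨a, 0, 0, rfl⟩, hc, hb⟩
    · rintro ⟨⟨a, b, c, rfl⟩, hc, hb⟩
      obtain ⟨_, _, _, _, _, _, _, hb', hc'⟩ := e_entries a b c
      rw [hb'] at hb; rw [hc'] at hc
      exact ⟨a, by rw [hb, hc]⟩
  -- B set
  · ext g
    constructor
    · rintro ⟨b, rfl⟩
      obtain ⟨h1, h2, h3, h4, h5, h6, ha, _, hc⟩ := e_entries (0:F) b (0:F)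
      exact ⟨⟨0, b, 0, rfl⟩, ha, hc⟩
    · rintro ⟨⟨a, b, c, rfl⟩, ha, hc⟩
      obtain ⟨_, _, _, _, _, _, ha', _, hc'⟩ := e_entries a b c
      rw [ha'] at ha; rw [hc'] at hc
      exact ⟨b, by rw [ha, hc]⟩
  -- M set
  · ext g
    constructor
    · rintro ⟨c, rfl⟩
      obtain ⟨h1, h2, h3, h4, h5, h6, ha, hb, _⟩ := e_entries (0:F) (0:F) c
      exact ⟨⟨0, 0, c, rfl⟩, ha, hb⟩
    · rintro ⟨⟨a, b, c, rfl⟩, ha, hb⟩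
      obtain ⟨_, _, _, _, _, _, ha', hb', _⟩ := e_entries a b c
      rw [ha'] at ha; rw [hb'] at hb
      exact ⟨c, by rw [ha, hb]⟩
  -- M = center
  · ext g
    rw [Subgroup.mem_map]
    constructor
    · rintro ⟨c, rfl⟩
      refine ⟨⟨e 0 0 c, ⟨0, 0, c, rfl⟩⟩, Subgroup.mem_center_iff.mpr ?_, rfl⟩
      rintro ⟨y, a, b, c', rfl⟩
      apply Subtype.ext
      show e a b c' * e 0 0 c = e 0 0 c * e a b c'
      rw [e_mul, e_mul]; ring_nf
    · rintro ⟨x, hx, rfl⟩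
      rw [Subgroup.mem_center_iff] at hx
      obtain ⟨a, b, c, hxval⟩ := x.2
      have h1 := hx ⟨e 1 0 0, ⟨1, 0, 0, rfl⟩⟩
      have h2 := hx ⟨e 0 1 0, ⟨0, 1, 0, rfl⟩⟩
      have h1' : e 1 0 0 * (x : GL (Fin 3) F) = (x : GL (Fin 3) F) * e 1 0 0 :=
        congrArg Subtype.val h1
      have h2' : e 0 1 0 * (x : GL (Fin 3) F) = (x : GL (Fin 3) F) * e 0 1 0 :=
        congrArg Subtype.val h2
      rw [hxval, e_mul, e_mul] at h1' h2'
      obtain ⟨_, _, hcc1⟩ := e_inj h1'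
      obtain ⟨_, _, hcc2⟩ := e_inj h2'
      have hb : b = 0 := by linear_combination hcc1
      have ha : a = 0 := by linear_combination -hcc2
      show (x : GL (Fin 3) F) ∈ Msub F
      exact ⟨c, by rw [hxval, ha, hb]⟩
  -- card A
  · rw [← hF, ← Nat.card_eq_fintype_card]
    apply Nat.card_congr
    exact Equiv.symm
      { toFun := fun a => ⟨e a 0 0, a, rfl⟩
        invFun := fun g => (g.1 : Matrix (Fin 3) (Fin 3) F) 0 1
        left_inv := fun a => (e_entries a 0 0).2.2.2.2.2.2.1
        right_inv := by
          rintro ⟨g, a, rfl⟩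
          apply Subtype.ext
          apply Units.ext
          dsimp only
          rw [(e_entries a 0 0).2.2.2.2.2.2.1] }
  -- card B
  · rw [← hF, ← Nat.card_eq_fintype_card]
    apply Nat.card_congr
    exact Equiv.symm
      { toFun := fun b => ⟨e 0 b 0, b, rfl⟩
        invFun := fun g => (g.1 : Matrix (Fin 3) (Fin 3) F) 1 2
        left_inv := fun b => (e_entries 0 b 0).2.2.2.2.2.2.2.1
        right_inv := by
          rintro ⟨g, b, rfl⟩
          apply Subtype.ext
          apply Units.ext
          dsimp only
          rw [(e_entries 0 b 0).2.2.2.2.2.2.2.1] }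
  -- card M
  · rw [← hF, ← Nat.card_eq_fintype_card]
    apply Nat.card_congr
    exact Equiv.symm
      { toFun := fun c => ⟨e 0 0 c, c, rfl⟩
        invFun := fun g => (g.1 : Matrix (Fin 3) (Fin 3) F) 0 2
        left_inv := fun c => (e_entries 0 0 c).2.2.2.2.2.2.2.2
        right_inv := by
          rintro ⟨g, c, rfl⟩
          apply Subtype.ext
          apply Units.ext
          dsimp only
          rw [(e_entries 0 0 c).2.2.2.2.2.2.2.2] }
  -- card H
  · have : Nat.card (↥(Hsub F)) = Nat.card (F × F × F) := by
      apply Nat.card_congr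
      exact Equiv.symm
        { toFun := fun p => ⟨e p.1 p.2.1 p.2.2, p.1, p.2.1, p.2.2, rfl⟩
          invFun := fun g => ⟨(g.1 : Matrix (Fin 3) (Fin 3) F) 0 1,
            (g.1 : Matrix (Fin 3) (Fin 3) F) 1 2, (g.1 : Matrix (Fin 3) (Fin 3) F) 0 2⟩
          left_inv := by
            rintro ⟨a, b, c⟩
            obtain ⟨_, _, _, _, _, _, h7, h8, h9⟩ := e_entries a b c
            simp [h7, h8, h9]
          right_inv := by
            rintro ⟨g, a, b, c, rfl⟩
            apply Subtype.ext
            obtain ⟨_, _, _, _, _, _, h7, h8, h9⟩ := e_entries a b c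
            dsimp only
            rw [h7, h8, h9] }
    rw [this]
    simp only [Nat.card_prod, Nat.card_eq_fintype_card, Fintype.card_prod, hF]
    ring
  -- AM = A * M
  · ext g
    constructor
    · rintro ⟨a, c, rfl⟩
      refine ⟨e a 0 0, ⟨a, rfl⟩, e 0 0 c, ⟨c, rfl⟩, ?_⟩
      (try dsimp only); rw [e_mul]; ring_nf
    · rintro ⟨x, ⟨a, rfl⟩, y, ⟨c, rfl⟩, rfl⟩
      exact ⟨a, c, by (try dsimp only); rw [e_mul]; ring_nf⟩
  -- BM = B * M
  · ext g
    constructor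
    · rintro ⟨b, c, rfl⟩
      refine ⟨e 0 b 0, ⟨b, rfl⟩, e 0 0 c, ⟨c, rfl⟩, ?_⟩
      (try dsimp only); rw [e_mul]; ring_nf
    · rintro ⟨x, ⟨b, rfl⟩, y, ⟨c, rfl⟩, rfl⟩
      exact ⟨b, c, by (try dsimp only); rw [e_mul]; ring_nf⟩
  -- card AM
  · have : Nat.card (↥(AMsub F)) = Nat.card (F × F) := by
      apply Nat.card_congr
      exact Equiv.symm
        { toFun := fun p => ⟨e p.1 0 p.2, p.1, p.2, rfl⟩
          invFun := fun g => ⟨(g.1 : Matrix (Fin 3) (Fin 3) F) 0 1,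
            (g.1 : Matrix (Fin 3) (Fin 3) F) 0 2⟩
          left_inv := by
            rintro ⟨a, c⟩
            obtain ⟨_, _, _, _, _, _, h7, _, h9⟩ := e_entries a (0:F) c
            simp [h7, h9]
          right_inv := by
            rintro ⟨g, a, c, rfl⟩
            apply Subtype.ext
            obtain ⟨_, _, _, _, _, _, h7, _, h9⟩ := e_entries a (0:F) c
            dsimp only
            rw [h7, h9] }
    rw [this]
    simp only [Nat.card_prod, Nat.card_eq_fintype_card, Fintype.card_prod, hF]
    ring
  -- card BM
  · have : Nat.card (↥(BMsub F)) = Nat.card (F × F) := by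
      apply Nat.card_congr
      exact Equiv.symm
        { toFun := fun p => ⟨e 0 p.1 p.2, p.1, p.2, rfl⟩
          invFun := fun g => ⟨(g.1 : Matrix (Fin 3) (Fin 3) F) 1 2,
            (g.1 : Matrix (Fin 3) (Fin 3) F) 0 2⟩
          left_inv := by
            rintro ⟨b, c⟩
            obtain ⟨_, _, _, _, _, _, _, h8, h9⟩ := e_entries (0:F) b c
            simp [h8, h9]
          right_inv := by
            rintro ⟨g, b, c, rfl⟩
            apply Subtype.ext
            obtain ⟨_, _, _, _, _, _, _, h8, h9⟩ := e_entries (0:F) b c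
            dsimp only
            rw [h8, h9] }
    rw [this]
    simp only [Nat.card_prod, Nat.card_eq_fintype_card, Fintype.card_prod, hF]
    ring
  -- AMB decomposition
  · rintro g ⟨a, b, c, rfl⟩
    refine ⟨e a 0 0, ⟨a, rfl⟩, e 0 0 (c - a * b), ⟨c - a * b, rfl⟩, e 0 b 0, ⟨b, rfl⟩, ?_⟩
    rw [e_mul, e_mul]; ring_nf
  -- AB ∩ BA = A ∪ B
  · ext g
    constructor
    · rintro ⟨⟨x, ⟨a, rfl⟩, y, ⟨b, rfl⟩, rfl⟩, x', ⟨b', rfl⟩, y', ⟨a', rfl⟩, hg⟩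
      dsimp only at hg
      rw [e_mul, e_mul] at hg
      obtain ⟨ha, hb, hc⟩ := e_inj hg
      simp only [add_zero, zero_add, mul_zero, zero_mul] at ha hb hc
      have hab : a * b = 0 := by linear_combination -hc
      rcases mul_eq_zero.mp hab with h | h
      · right
        refine ⟨b, ?_⟩
        dsimp only
        rw [e_mul, h]; ring_nf
      · left
        refine ⟨a, ?_⟩
        dsimp only
        rw [e_mul, h]; ring_nf
    · rintro (⟨a, rfl⟩ | ⟨b, rfl⟩)
      · constructor
        · exact ⟨e a 0 0, ⟨a, rfl⟩, e 0 0 0, ⟨0, rfl⟩, by (try dsimp only); rw [e_mul]; ring_nf⟩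
        · exact ⟨e 0 0 0, ⟨0, rfl⟩, e a 0 0, ⟨a, rfl⟩, by (try dsimp only); rw [e_mul]; ring_nf⟩
      · constructor
        · exact ⟨e 0 0 0, ⟨0, rfl⟩, e 0 b 0, ⟨b, rfl⟩, by (try dsimp only); rw [e_mul]; ring_nf⟩
        · exact ⟨e 0 b 0, ⟨b, rfl⟩, e 0 0 0, ⟨0, rfl⟩, by (try dsimp only); rw [e_mul]; ring_nf⟩
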